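/- If H is an FH-algebra over a commutative ring k with FH-homomorphism f and right norm t, then in H ⊗_k H the identity ∑ t_2 ⊗ t_1 = ∑ b^{-1} S²(t_1) ⊗ t_2 holds, where Δ(t) = ∑ t_1 ⊗ t_2, S is the antipode, and b is the right distinguished group-like element of H. -/

import Mathlib

open TensorProduct

/-- `(φ, x, y)` is a Frobenius system for the `k`-algebra `A`. -/
def IsFrobeniusSystem (k : Type*) [CommRing k] (A : Type*) [Ring A] [Algebra k A]
    (φ : A →ₗ[k] k) {n : ℕ} (x y : Fin n → A) : Prop :=
  ∀ a : A, (∑ i, φ (y i * a) • x i = a) ∧ (∑ i, φ (a * x i) • y i = a)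

/-- The convolution product on the dual `H*`: `(conv f g) a = ∑ f(a₁) g(a₂)`. -/
noncomputable def conv (k : Type*) [CommRing k] (H : Type*) [AddCommGroup H] [Module k H]
    [Coalgebra k H] (f g : H →ₗ[k] k) : H →ₗ[k] k :=
  (LinearMap.mul' k k) ∘ₗ (TensorProduct.map f g) ∘ₗ (Coalgebra.comul (R := k))




section Aux
variable {k : Type*} [CommRing k] {H : Type*} [Ring H] [HopfAlgebra k H]

noncomputable def triS (g₀ : H →ₗ[k] k) (g₂ g₃ : H →ₗ[k] H) : H →ₗ[k] (H →ₗ[k] (H →ₗ[k] H)) :=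
  g₀.smulRight ((LinearMap.mul k H).compl₁₂ g₂ g₃)

@[simp] lemma triS_apply (g₀ : H →ₗ[k] k) (g₂ g₃ : H →ₗ[k] H) (u v w : H) :
    triS g₀ g₂ g₃ u v w = g₀ u • (g₂ v * g₃ w) := rfl

noncomputable def triM (g₁ g₂ g₃ : H →ₗ[k] H) : H →ₗ[k] (H →ₗ[k] (H →ₗ[k] H)) :=
  ((LinearMap.mul k H).compl₁₂ g₁ g₂).compr₂ ((LinearMap.mul k H).compl₂ g₃)

@[simp] lemma triM_apply (g₁ g₂ g₃ : H →ₗ[k] H) (u v w : H) :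
    triM g₁ g₂ g₃ u v w = (g₁ u * g₂ v) * g₃ w := rfl

noncomputable def T3 (β : H →ₗ[k] (H →ₗ[k] (H →ₗ[k] H))) : H ⊗[k] (H ⊗[k] H) →ₗ[k] H :=
  TensorProduct.lift ((TensorProduct.lift.equiv (RingHom.id k) H H H).toLinearMap ∘ₗ β)

@[simp] lemma T3_tmul (β : H →ₗ[k] (H →ₗ[k] (H →ₗ[k] H))) (u v w : H) :
    T3 β (u ⊗ₜ[k] (v ⊗ₜ[k] w)) = β u v w := by
  simp [T3]

lemma tri_coassoc (β : H →ₗ[k] (H →ₗ[k] (H →ₗ[k] H))) (a : H) (r : Coalgebra.Repr k a (H × H))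
    (r₁ : ∀ i : r.ι, Coalgebra.Repr k (r.left i) (H × H)) (r₂ : ∀ i : r.ι, Coalgebra.Repr k (r.right i) (H × H)) :
    ∑ i ∈ r.index, ∑ j ∈ (r₁ i).index, β ((r₁ i).left j) ((r₁ i).right j) (r.right i)
      = ∑ i ∈ r.index, ∑ j ∈ (r₂ i).index, β (r.left i) ((r₂ i).left j) ((r₂ i).right j) := by
  have key := Coalgebra.sum_tmul_tmul_eq r r₁ r₂
  have := congrArg (T3 β) key
  simpa [map_sum] using this

end Aux

section Aux2
variable {k : Type*} [CommRing k] {H : Type*} [Ring H] [HopfAlgebra k H]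

/-- repr of `c * b` for a group-like `b`. -/
noncomputable def Coalgebra.Repr.mulGl {c : H} (rc : Coalgebra.Repr k c (H × H)) (b : H)
    (hb : Coalgebra.comul (R := k) b = b ⊗ₜ[k] b) : Coalgebra.Repr k (c * b) (H × H) where
  index := rc.index
  left := fun j => rc.left j * b
  right := fun j => rc.right j * b
  eq := by
    rw [show CoalgebraStruct.comul (R := k) (c * b) = Coalgebra.comul (R := k) c
        * Coalgebra.comul (R := k) b from Bialgebra.comul_mul c b, hb, ← rc.eq,
      Finset.sum_mul]
    simp [Algebra.TensorProduct.tmul_mul_tmul]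

lemma sum_counit_smul_left {a : H} (r : Coalgebra.Repr k a (H × H)) :
    ∑ i ∈ r.index, (Coalgebra.counit (R := k) (r.left i)) • r.right i = a := by
  have := congrArg (TensorProduct.lid k H) (Coalgebra.sum_counit_tmul_eq r)
  simpa [map_sum, -Coalgebra.sum_counit_tmul_eq] using this

lemma sum_counit_smul_right {a : H} (r : Coalgebra.Repr k a (H × H)) :
    ∑ i ∈ r.index, (Coalgebra.counit (R := k) (r.right i)) • r.left i = a := by
  have := congrArg (TensorProduct.rid k H) (Coalgebra.sum_tmul_counit_eq r)
  simpa [map_sum, -Coalgebra.sum_tmul_counit_eq, -Coalgebra.sum_map_tmul_counit_eq, -Coalgebra.sum_counit_tmul_map_eq] using this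

lemma comul_mul_repr {u v : H} (ru : Coalgebra.Repr k u (H × H)) (rv : Coalgebra.Repr k v (H × H)) :
    Coalgebra.comul (R := k) (u * v) = ∑ p ∈ ru.index, ∑ j ∈ rv.index,
      (ru.left p * rv.left j) ⊗ₜ[k] (ru.right p * rv.right j) := by
  rw [Bialgebra.comul_mul, ← ru.eq, ← rv.eq, Finset.sum_mul_sum]
  simp [Algebra.TensorProduct.tmul_mul_tmul]

end Aux2


/-- Radford's formula for FH-algebras: if `H` is an FH-algebra over a commutative ring `k`
with FH-homomorphism `f`, right norm `t`, and right distinguished group-like element `b`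
(an invertible group-like element with `g · f = g(b) · f` for all `g ∈ H*`), then
`∑ t₂ ⊗ t₁ = ∑ b⁻¹ S²(t₁) ⊗ t₂` in `H ⊗ H`. -/
theorem stmt_7 (k : Type*) [CommRing k] (H : Type*) [Ring H] [HopfAlgebra k H]
    (hfin : Module.Finite k H) (hproj : Module.Projective k H)
    (f : H →ₗ[k] k) (nn : ℕ) (x y : Fin nn → H) (hsys : IsFrobeniusSystem k H f x y)
    (hri : ∀ a : H,
      (TensorProduct.lid k H) ((TensorProduct.map f LinearMap.id) (Coalgebra.comul (R := k) a))
        = f a • (1 : H))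
    (t : H) (ht : ∀ a : H, f (t * a) = Coalgebra.counit (R := k) a)
    (b binv : H) (hb1 : b * binv = 1) (hb2 : binv * b = 1)
    (hbgl : Coalgebra.comul (R := k) b = b ⊗ₜ[k] b) (hbcu : Coalgebra.counit (R := k) b = 1)
    (hbdist : ∀ (g : H →ₗ[k] k) (c : H), (conv k H g f) c = g b * f c) :
    (TensorProduct.comm k H H) (Coalgebra.comul (R := k) t) =
      (TensorProduct.map
          (LinearMap.mulLeft k binv ∘ₗ
            (HopfAlgebra.antipode (R := k) ∘ₗ HopfAlgebra.antipode (R := k)))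
          LinearMap.id)
        (Coalgebra.comul (R := k) t) := by
  classical
  -- separation of points by the dual module
  have sep : ∀ u : H, (∀ g : H →ₗ[k] k, g u = 0) → u = 0 := by
    intro u hu
    obtain ⟨s, hs⟩ := (Module.projective_def').mp hproj
    have hsu : s u = 0 := by
      ext p
      simpa using hu (Finsupp.lapply p ∘ₗ s)
    have h2 := LinearMap.congr_fun hs u
    simp only [LinearMap.comp_apply, LinearMap.id_apply] at h2
    rw [← h2, hsu, map_zero]
  -- the distinguished group-like property, internal form (D)
  have hD : ∀ c : H, (TensorProduct.rid k H) ((LinearMap.lTensor H f)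
      (Coalgebra.comul (R := k) c)) = f c • b := by
    intro c
    have key : ∀ g : H →ₗ[k] k,
        g ((TensorProduct.rid k H) ((LinearMap.lTensor H f) (Coalgebra.comul (R := k) c))
          - f c • b) = 0 := by
      intro g
      have h1 : ∀ z : H ⊗[k] H, g ((TensorProduct.rid k H) ((LinearMap.lTensor H f) z))
          = (LinearMap.mul' k k) ((TensorProduct.map g f) z) := by
        intro z
        induction z using TensorProduct.induction_on with
        | zero => simp
        | tmul u v => simp [mul_comm]
        | add z1 z2 ih1 ih2 => simp only [map_add, ih1, ih2]
      have h2 := hbdist g c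
      simp only [conv, LinearMap.comp_apply] at h2
      rw [map_sub, h1, h2, map_smul]
      simp [smul_eq_mul, mul_comm]
    exact sub_eq_zero.mp (sep _ key)
  -- pointwise versions with representations
  have hri_repr : ∀ (u v : H) (ru : Coalgebra.Repr k u (H × H)) (rv : Coalgebra.Repr k v (H × H)),
      ∑ p ∈ ru.index, ∑ j ∈ rv.index,
        f (ru.left p * rv.left j) • (ru.right p * rv.right j) = f (u * v) • (1 : H) := by
    intro u v ru rv
    have h0 := hri (u * v)
    rw [comul_mul_repr ru rv] at h0
    simpa [map_sum] using h0
  have hD_repr : ∀ (u v : H) (ru : Coalgebra.Repr k u (H × H)) (rv : Coalgebra.Repr k v (H × H)),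
      ∑ p ∈ ru.index, ∑ j ∈ rv.index,
        f (ru.right p * rv.right j) • (ru.left p * rv.left j) = f (u * v) • b := by
    intro u v ru rv
    have h0 := hD (u * v)
    rw [comul_mul_repr ru rv] at h0
    simpa [map_sum] using h0
  -- a fixed representation of `comul t`
  let rt : Coalgebra.Repr k t (H × H) := Coalgebra.Repr.arbitrary k t
  -- ## Lemma (C) : ∑ f(t₁ c) t₂ = S c
  have hC : ∀ c : H, ∑ p ∈ rt.index, f (rt.left p * c) • rt.right p
      = HopfAlgebra.antipode (R := k) c := by
    intro c
    let r : Coalgebra.Repr k c (H × H) := Coalgebra.Repr.arbitrary k c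
    let r₁ : ∀ i : r.ι, Coalgebra.Repr k (r.left i) (H × H) := fun i => Coalgebra.Repr.arbitrary k _
    let r₂ : ∀ i : r.ι, Coalgebra.Repr k (r.right i) (H × H) := fun i => Coalgebra.Repr.arbitrary k _
    have key := tri_coassoc (∑ p ∈ rt.index,
      triS (f ∘ₗ LinearMap.mulLeft k (rt.left p)) (LinearMap.mulLeft k (rt.right p))
        (HopfAlgebra.antipode (R := k))) c r r₁ r₂
    simp only [LinearMap.sum_apply, triS_apply, LinearMap.comp_apply,
      LinearMap.mulLeft_apply] at key
    -- evaluate the left side of key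
    have lhs_eq : ∑ i ∈ r.index, ∑ j ∈ (r₁ i).index, ∑ p ∈ rt.index,
        f (rt.left p * (r₁ i).left j) • (rt.right p * (r₁ i).right j
          * HopfAlgebra.antipode (R := k) (r.right i))
        = HopfAlgebra.antipode (R := k) c := by
      have step : ∀ i ∈ r.index, ∑ j ∈ (r₁ i).index, ∑ p ∈ rt.index,
          f (rt.left p * (r₁ i).left j) • (rt.right p * (r₁ i).right j
            * HopfAlgebra.antipode (R := k) (r.right i))
          = (Coalgebra.counit (R := k) (r.left i)) •
              HopfAlgebra.antipode (R := k) (r.right i) := by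
        intro i _
        rw [Finset.sum_comm]
        have : ∑ p ∈ rt.index, ∑ j ∈ (r₁ i).index,
            f (rt.left p * (r₁ i).left j) • (rt.right p * (r₁ i).right j
              * HopfAlgebra.antipode (R := k) (r.right i))
            = (∑ p ∈ rt.index, ∑ j ∈ (r₁ i).index,
                f (rt.left p * (r₁ i).left j) • (rt.right p * (r₁ i).right j))
              * HopfAlgebra.antipode (R := k) (r.right i) := by
          simp [Finset.sum_mul, smul_mul_assoc]
        rw [this, hri_repr t (r.left i) rt (r₁ i), ht, smul_mul_assoc, one_mul]
      rw [Finset.sum_congr rfl step]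
      calc ∑ i ∈ r.index, Coalgebra.counit (R := k) (r.left i)
            • HopfAlgebra.antipode (R := k) (r.right i)
          = HopfAlgebra.antipode (R := k)
              (∑ i ∈ r.index, Coalgebra.counit (R := k) (r.left i) • r.right i) := by
            rw [map_sum]
            exact Finset.sum_congr rfl fun i _ => (map_smul _ _ _).symm
        _ = HopfAlgebra.antipode (R := k) c := congrArg _ (sum_counit_smul_left r)
    -- evaluate the right side of key
    have rhs_eq : ∑ i ∈ r.index, ∑ j ∈ (r₂ i).index, ∑ p ∈ rt.index,
        f (rt.left p * r.left i) • (rt.right p * (r₂ i).left j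
          * HopfAlgebra.antipode (R := k) ((r₂ i).right j))
        = ∑ p ∈ rt.index, f (rt.left p * c) • rt.right p := by
      have step : ∀ i ∈ r.index, ∑ j ∈ (r₂ i).index, ∑ p ∈ rt.index,
          f (rt.left p * r.left i) • (rt.right p * (r₂ i).left j
            * HopfAlgebra.antipode (R := k) ((r₂ i).right j))
          = Coalgebra.counit (R := k) (r.right i) •
              ∑ p ∈ rt.index, f (rt.left p * r.left i) • rt.right p := by
        intro i _
        rw [Finset.sum_comm, Finset.smul_sum]
        refine Finset.sum_congr rfl fun p _ => ?_
        calc ∑ j ∈ (r₂ i).index, f (rt.left p * r.left i) • (rt.right p * (r₂ i).left j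
              * HopfAlgebra.antipode (R := k) ((r₂ i).right j))
            = f (rt.left p * r.left i) • (rt.right p * ∑ j ∈ (r₂ i).index, (r₂ i).left j
                * HopfAlgebra.antipode (R := k) ((r₂ i).right j)) := by
              rw [Finset.mul_sum, Finset.smul_sum]
              exact Finset.sum_congr rfl fun j _ => by rw [mul_assoc]
          _ = Coalgebra.counit (R := k) (r.right i) • (f (rt.left p * r.left i) • rt.right p) := by
              rw [HopfAlgebra.sum_mul_antipode_eq_smul (r₂ i)]
              rw [mul_smul_comm, mul_one, smul_comm]
      rw [Finset.sum_congr rfl step]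
      simp_rw [Finset.smul_sum]
      rw [Finset.sum_comm]
      refine Finset.sum_congr rfl fun p _ => ?_
      have h3 : ∑ i ∈ r.index, Coalgebra.counit (R := k) (r.right i)
          • (f (rt.left p * r.left i) • rt.right p)
          = (∑ i ∈ r.index, Coalgebra.counit (R := k) (r.right i)
              * f (rt.left p * r.left i)) • rt.right p := by
        rw [Finset.sum_smul]
        exact Finset.sum_congr rfl fun i _ => by rw [mul_smul]
      rw [h3]
      congr 1
      have h4 : ∑ i ∈ r.index, Coalgebra.counit (R := k) (r.right i)
          * f (rt.left p * r.left i)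
          = f (rt.left p * ∑ i ∈ r.index,
              Coalgebra.counit (R := k) (r.right i) • r.left i) := by
        rw [Finset.mul_sum, map_sum]
        exact Finset.sum_congr rfl fun i _ => by
          rw [mul_smul_comm, map_smul, smul_eq_mul]
      rw [h4, sum_counit_smul_right r]
    rw [← rhs_eq, ← key]
    exact lhs_eq
  -- ## Lemma (SB) : binv * S xx = S (xx * b)
  have hSB : ∀ xx : H, binv * HopfAlgebra.antipode (R := k) xx
      = HopfAlgebra.antipode (R := k) (xx * b) := by
    intro xx
    let r : Coalgebra.Repr k xx (H × H) := Coalgebra.Repr.arbitrary k xx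
    let r₁ : ∀ i : r.ι, Coalgebra.Repr k (r.left i) (H × H) := fun i => Coalgebra.Repr.arbitrary k _
    let r₂ : ∀ i : r.ι, Coalgebra.Repr k (r.right i) (H × H) := fun i => Coalgebra.Repr.arbitrary k _
    have key := tri_coassoc
      (triM (LinearMap.mulLeft k binv ∘ₗ HopfAlgebra.antipode (R := k))
        (LinearMap.mulRight k b)
        (HopfAlgebra.antipode (R := k) ∘ₗ LinearMap.mulRight k b)) xx r r₁ r₂
    simp only [triM_apply, LinearMap.comp_apply, LinearMap.mulLeft_apply,
      LinearMap.mulRight_apply] at key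
    have lhs_eq : ∑ i ∈ r.index, ∑ j ∈ (r₁ i).index,
        binv * HopfAlgebra.antipode (R := k) ((r₁ i).left j) * ((r₁ i).right j * b)
          * HopfAlgebra.antipode (R := k) (r.right i * b)
        = HopfAlgebra.antipode (R := k) (xx * b) := by
      have step : ∀ i ∈ r.index, ∑ j ∈ (r₁ i).index,
          binv * HopfAlgebra.antipode (R := k) ((r₁ i).left j) * ((r₁ i).right j * b)
            * HopfAlgebra.antipode (R := k) (r.right i * b)
          = Coalgebra.counit (R := k) (r.left i)
            • HopfAlgebra.antipode (R := k) (r.right i * b) := by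
        intro i _
        have h5 : ∑ j ∈ (r₁ i).index,
            binv * HopfAlgebra.antipode (R := k) ((r₁ i).left j) * ((r₁ i).right j * b)
            = binv * ((∑ j ∈ (r₁ i).index,
                HopfAlgebra.antipode (R := k) ((r₁ i).left j) * (r₁ i).right j) * b) := by
          rw [Finset.sum_mul, Finset.mul_sum]
          exact Finset.sum_congr rfl fun j _ => by simp only [mul_assoc]
        rw [← Finset.sum_mul, h5, HopfAlgebra.sum_antipode_mul_eq_smul (r₁ i)]
        rw [smul_mul_assoc, one_mul, mul_smul_comm, hb2, smul_mul_assoc, one_mul]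
      rw [Finset.sum_congr rfl step]
      have h6 : ∀ i, Coalgebra.counit (R := k) (r.left i)
          • HopfAlgebra.antipode (R := k) (r.right i * b)
          = (HopfAlgebra.antipode (R := k) ∘ₗ LinearMap.mulRight k b)
              (Coalgebra.counit (R := k) (r.left i) • r.right i) := by
        intro i
        rw [map_smul]
        rfl
      rw [Finset.sum_congr rfl fun i _ => h6 i, ← map_sum, sum_counit_smul_left r]
      rfl
    have rhs_eq : ∑ i ∈ r.index, ∑ j ∈ (r₂ i).index,
        binv * HopfAlgebra.antipode (R := k) (r.left i) * ((r₂ i).left j * b)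
          * HopfAlgebra.antipode (R := k) ((r₂ i).right j * b)
        = binv * HopfAlgebra.antipode (R := k) xx := by
      have step : ∀ i ∈ r.index, ∑ j ∈ (r₂ i).index,
          binv * HopfAlgebra.antipode (R := k) (r.left i) * ((r₂ i).left j * b)
            * HopfAlgebra.antipode (R := k) ((r₂ i).right j * b)
          = Coalgebra.counit (R := k) (r.right i)
            • (binv * HopfAlgebra.antipode (R := k) (r.left i)) := by
        intro i _
        have h7 : ∑ j ∈ (r₂ i).index, ((r₂ i).left j * b)
            * HopfAlgebra.antipode (R := k) ((r₂ i).right j * b)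
            = Coalgebra.counit (R := k) (r.right i * b) • (1 : H) :=
          HopfAlgebra.sum_mul_antipode_eq_smul ((r₂ i).mulGl b hbgl)
        calc ∑ j ∈ (r₂ i).index,
            binv * HopfAlgebra.antipode (R := k) (r.left i) * ((r₂ i).left j * b)
              * HopfAlgebra.antipode (R := k) ((r₂ i).right j * b)
            = (binv * HopfAlgebra.antipode (R := k) (r.left i))
              * ∑ j ∈ (r₂ i).index, ((r₂ i).left j * b)
                * HopfAlgebra.antipode (R := k) ((r₂ i).right j * b) := by
              rw [Finset.mul_sum]
              exact Finset.sum_congr rfl fun j _ => by rw [mul_assoc]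
          _ = Coalgebra.counit (R := k) (r.right i)
              • (binv * HopfAlgebra.antipode (R := k) (r.left i)) := by
              rw [h7, Bialgebra.counit_mul, hbcu, mul_one, mul_smul_comm, mul_one]
      rw [Finset.sum_congr rfl step]
      have h8 : ∀ i, Coalgebra.counit (R := k) (r.right i)
          • (binv * HopfAlgebra.antipode (R := k) (r.left i))
          = (LinearMap.mulLeft k binv ∘ₗ HopfAlgebra.antipode (R := k))
              (Coalgebra.counit (R := k) (r.right i) • r.left i) := by
        intro i
        rw [map_smul]
        rfl
      rw [Finset.sum_congr rfl fun i _ => h8 i, ← map_sum, sum_counit_smul_right r]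
      rfl
    rw [← rhs_eq, ← key]
    exact lhs_eq
  -- ## Lemma (H) : ∑ f(t₂ y) (S t₁ * b) = y
  have hH : ∀ yy : H, ∑ p ∈ rt.index,
      f (rt.right p * yy) • (HopfAlgebra.antipode (R := k) (rt.left p) * b) = yy := by
    intro yy
    let ry : Coalgebra.Repr k yy (H × H) := Coalgebra.Repr.arbitrary k yy
    let Ky : H →ₗ[k] H := ∑ j ∈ ry.index,
      (f ∘ₗ LinearMap.mulRight k (ry.right j)).smulRight (ry.left j)
    have Ky_apply : ∀ w : H, Ky w = ∑ j ∈ ry.index, f (w * ry.right j) • ry.left j := by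
      intro w
      simp [Ky, LinearMap.sum_apply]
    let rt₁ : ∀ i : rt.ι, Coalgebra.Repr k (rt.left i) (H × H) := fun i => Coalgebra.Repr.arbitrary k _
    let rt₂ : ∀ i : rt.ι, Coalgebra.Repr k (rt.right i) (H × H) := fun i => Coalgebra.Repr.arbitrary k _
    have key := tri_coassoc (triM (HopfAlgebra.antipode (R := k)) LinearMap.id Ky) t rt rt₁ rt₂
    simp only [triM_apply, LinearMap.id_apply] at key
    have lhs_eq : ∑ i ∈ rt.index, ∑ j ∈ (rt₁ i).index,
        HopfAlgebra.antipode (R := k) ((rt₁ i).left j) * (rt₁ i).right j * Ky (rt.right i)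
        = yy := by
      have step : ∀ i ∈ rt.index, ∑ j ∈ (rt₁ i).index,
          HopfAlgebra.antipode (R := k) ((rt₁ i).left j) * (rt₁ i).right j * Ky (rt.right i)
          = Coalgebra.counit (R := k) (rt.left i) • Ky (rt.right i) := by
        intro i _
        rw [← Finset.sum_mul, HopfAlgebra.sum_antipode_mul_eq_smul (rt₁ i),
          smul_mul_assoc, one_mul]
      rw [Finset.sum_congr rfl step]
      have h9 : ∑ i ∈ rt.index, Coalgebra.counit (R := k) (rt.left i) • Ky (rt.right i)
          = Ky t := by
        calc ∑ i ∈ rt.index, Coalgebra.counit (R := k) (rt.left i) • Ky (rt.right i)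
            = Ky (∑ i ∈ rt.index, Coalgebra.counit (R := k) (rt.left i) • rt.right i) := by
              rw [map_sum]
              exact Finset.sum_congr rfl fun i _ => (map_smul _ _ _).symm
          _ = Ky t := congrArg _ (sum_counit_smul_left rt)
      rw [h9, Ky_apply]
      have h10 : ∀ j ∈ ry.index, f (t * ry.right j) • ry.left j
          = Coalgebra.counit (R := k) (ry.right j) • ry.left j := by
        intro j _
        rw [ht]
      rw [Finset.sum_congr rfl h10, sum_counit_smul_right ry]
    have rhs_eq : ∑ i ∈ rt.index, ∑ j ∈ (rt₂ i).index,
        HopfAlgebra.antipode (R := k) (rt.left i) * (rt₂ i).left j * Ky ((rt₂ i).right j)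
        = ∑ i ∈ rt.index, f (rt.right i * yy)
            • (HopfAlgebra.antipode (R := k) (rt.left i) * b) := by
      refine Finset.sum_congr rfl fun i _ => ?_
      have h11 : ∑ j ∈ (rt₂ i).index,
          HopfAlgebra.antipode (R := k) (rt.left i) * (rt₂ i).left j * Ky ((rt₂ i).right j)
          = HopfAlgebra.antipode (R := k) (rt.left i)
            * ∑ j ∈ (rt₂ i).index, ∑ m ∈ ry.index,
                f ((rt₂ i).right j * ry.right m) • ((rt₂ i).left j * ry.left m) := by
        rw [Finset.mul_sum]
        refine Finset.sum_congr rfl fun j _ => ?_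
        rw [mul_assoc]
        congr 1
        rw [Ky_apply, Finset.mul_sum]
        exact Finset.sum_congr rfl fun m _ => by rw [mul_smul_comm]
      rw [h11, hD_repr (rt.right i) yy (rt₂ i) ry, mul_smul_comm]
    rw [← rhs_eq, ← key]
    exact lhs_eq
  -- ## assembling everything
  let Φ : H → (H ⊗[k] H →ₗ[k] H) := fun c => TensorProduct.lift
    (((f ∘ₗ LinearMap.mulRight k c).smulRight (LinearMap.id : H →ₗ[k] H)).flip)
  have Φ_tmul : ∀ (c u v : H), Φ c (u ⊗ₜ[k] v) = f (v * c) • u := by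
    intro c u v
    simp [Φ]
  have rep2 : ∀ z : H ⊗[k] H, z = ∑ m : Fin nn, (Φ (x m) z) ⊗ₜ[k] y m := by
    intro z
    induction z using TensorProduct.induction_on with
    | zero => simp
    | tmul u v =>
      calc u ⊗ₜ[k] v = u ⊗ₜ[k] (∑ m : Fin nn, f (v * x m) • y m) := by rw [(hsys v).2]
        _ = ∑ m : Fin nn, (Φ (x m) (u ⊗ₜ[k] v)) ⊗ₜ[k] y m := by
            rw [tmul_sum]
            exact Finset.sum_congr rfl fun m _ => by
              rw [Φ_tmul, smul_tmul]
    | add z1 z2 ih1 ih2 =>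
      calc z1 + z2 = (∑ m : Fin nn, (Φ (x m) z1) ⊗ₜ[k] y m)
            + ∑ m : Fin nn, (Φ (x m) z2) ⊗ₜ[k] y m := by rw [← ih1, ← ih2]
        _ = ∑ m : Fin nn, (Φ (x m) (z1 + z2)) ⊗ₜ[k] y m := by
            rw [← Finset.sum_add_distrib]
            exact Finset.sum_congr rfl fun m _ => by rw [map_add, add_tmul]
  have Z1 : (TensorProduct.comm k H H) (Coalgebra.comul (R := k) t)
      = ∑ p ∈ rt.index, rt.right p ⊗ₜ[k] rt.left p := by
    rw [← rt.eq, map_sum]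
    rfl
  have Z2 : (TensorProduct.map
        (LinearMap.mulLeft k binv ∘ₗ
          (HopfAlgebra.antipode (R := k) ∘ₗ HopfAlgebra.antipode (R := k)))
        LinearMap.id) (Coalgebra.comul (R := k) t)
      = ∑ p ∈ rt.index,
          (binv * HopfAlgebra.antipode (R := k) (HopfAlgebra.antipode (R := k) (rt.left p)))
            ⊗ₜ[k] rt.right p := by
    rw [← rt.eq, map_sum]
    rfl
  rw [Z1, Z2, rep2 (∑ p ∈ rt.index, rt.right p ⊗ₜ[k] rt.left p),
    rep2 (∑ p ∈ rt.index,
      (binv * HopfAlgebra.antipode (R := k) (HopfAlgebra.antipode (R := k) (rt.left p)))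
        ⊗ₜ[k] rt.right p)]
  refine Finset.sum_congr rfl fun m _ => ?_
  congr 1
  have e1 : Φ (x m) (∑ p ∈ rt.index, rt.right p ⊗ₜ[k] rt.left p)
      = HopfAlgebra.antipode (R := k) (x m) := by
    rw [map_sum, Finset.sum_congr rfl fun p _ => Φ_tmul (x m) (rt.right p) (rt.left p)]
    exact hC (x m)
  have e2 : Φ (x m) (∑ p ∈ rt.index,
      (binv * HopfAlgebra.antipode (R := k) (HopfAlgebra.antipode (R := k) (rt.left p)))
        ⊗ₜ[k] rt.right p) = HopfAlgebra.antipode (R := k) (x m) := by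
    rw [map_sum, Finset.sum_congr rfl fun p _ => Φ_tmul (x m) _ (rt.right p)]
    have h12 : ∀ p ∈ rt.index, f (rt.right p * x m)
        • (binv * HopfAlgebra.antipode (R := k) (HopfAlgebra.antipode (R := k) (rt.left p)))
        = f (rt.right p * x m) • (HopfAlgebra.antipode (R := k)
            (HopfAlgebra.antipode (R := k) (rt.left p) * b)) := by
      intro p _
      rw [hSB]
    rw [Finset.sum_congr rfl h12]
    have h13 : ∑ p ∈ rt.index, f (rt.right p * x m) • (HopfAlgebra.antipode (R := k)
        (HopfAlgebra.antipode (R := k) (rt.left p) * b))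
        = HopfAlgebra.antipode (R := k) (∑ p ∈ rt.index, f (rt.right p * x m)
            • (HopfAlgebra.antipode (R := k) (rt.left p) * b)) := by
      rw [map_sum]
      exact Finset.sum_congr rfl fun p _ => (map_smul _ _ _).symm
    rw [h13, hH (x m)]
  rw [e1, e2]
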